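/- arXiv:1310.4865 — 4 statements merged into one kernel-verified Lean document; each statement's English description precedes it below -/
import Mathlib

section
/- Let p ≥ 1 be an integer and let f be a Schwartz function on ℝ^p. Then the zeta integral Z(f,t) = ∫_{ℝ^p} f(x) ‖x‖^t dx converges absolutely for every t ∈ ℂ with Re(t) > −p, and the function t ↦ Z(f,t) is holomorphic on the half-plane {t ∈ ℂ : Re(t) > −p}. -/
open MeasureTheory Complex Metric Set


/-- `x ↦ (‖x‖ : ℂ) ^ t` is measurable. -/
lemma meas_norm_cpow {E' : Type*} [NormedAddCommGroup E'] [MeasurableSpace E']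
    [OpensMeasurableSpace E'] (t : ℂ) : Measurable fun x : E' => (‖x‖ : ℂ) ^ t := by
  have h1 : Measurable fun x : E' => (‖x‖ : ℂ) :=
    Complex.measurable_ofReal.comp measurable_norm
  simp only [Complex.cpow_def]
  exact Measurable.ite (h1 (measurableSet_singleton 0)) measurable_const
    ((h1.clog.mul measurable_const).cexp)

/-- `x ↦ ‖x‖ ^ s` (real power) is measurable. -/
lemma meas_norm_rpow {E' : Type*} [NormedAddCommGroup E'] [MeasurableSpace E']
    [OpensMeasurableSpace E'] (s : ℝ) : Measurable fun x : E' => ‖x‖ ^ s := by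
  have : (fun x : E' => ‖x‖ ^ s) = fun x => ‖(‖x‖ : ℂ) ^ (s : ℂ)‖ := by
    funext x
    rcases lt_or_eq_of_le (norm_nonneg x) with h | h
    · rw [norm_cpow_eq_rpow_re_of_pos h, Complex.ofReal_re]
    · rw [← h]
      rcases eq_or_ne s 0 with hs | hs
      · simp [hs]
      · rw [Real.zero_rpow hs, Complex.ofReal_zero, Complex.zero_cpow (by exact_mod_cast hs)]
        simp
  rw [this]
  exact continuous_norm.measurable.comp (meas_norm_cpow (s : ℂ))

lemma aux_ballInt (p : ℕ) (hp : 1 ≤ p) {s : ℝ} (hs : -(p : ℝ) < s) :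
    IntegrableOn (fun x : EuclideanSpace ℝ (Fin p) => ‖x‖ ^ s) (Metric.ball 0 1) volume := by
  have hdim : Module.finrank ℝ (EuclideanSpace ℝ (Fin p)) = p := finrank_euclideanSpace_fin
  haveI : Nontrivial (EuclideanSpace ℝ (Fin p)) :=
    Module.nontrivial_of_finrank_pos (R := ℝ) (by rw [hdim]; omega)
  set g : ℝ → ℝ := Set.indicator (Set.Ioo 0 1) (fun r => Real.exp (Real.log r * s)) with hg_def
  have hgr : ∀ r ∈ Set.Ioo (0:ℝ) 1, g r = r ^ s := fun r hr => by
    rw [hg_def, Set.indicator_of_mem hr, Real.rpow_def_of_pos hr.1]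
  have hgn : ∀ r ∉ Set.Ioo (0:ℝ) 1, g r = 0 := fun r hr => Set.indicator_of_notMem hr _
  -- 1D integrability of the density
  have h1 : IntegrableOn (fun r : ℝ => r ^ (p - 1) * g r) (Set.Ioi 0) volume := by
    have heq : Set.EqOn (fun r : ℝ => r ^ (p - 1) * g r)
        (Set.indicator (Set.Ioo (0:ℝ) 1) fun r => r ^ ((p : ℝ) - 1 + s)) (Set.Ioi 0) := by
      intro r _
      show r ^ (p - 1) * g r = (Set.Ioo (0:ℝ) 1).indicator (fun r => r ^ ((p : ℝ) - 1 + s)) r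
      by_cases h : r ∈ Set.Ioo (0:ℝ) 1
      · rw [hgr r h, Set.indicator_of_mem h, ← Real.rpow_natCast r (p - 1),
          ← Real.rpow_add h.1]
        congr 1
        rw [Nat.cast_sub hp]
        push_cast; ring
      · rw [hgn r h, Set.indicator_of_notMem h, mul_zero]
    rw [integrableOn_congr_fun heq measurableSet_Ioi]
    have : IntegrableOn (fun r : ℝ => r ^ ((p : ℝ) - 1 + s)) (Set.Ioo (0:ℝ) 1) volume :=
      (intervalIntegral.integrableOn_Ioo_rpow_iff one_pos).mpr (by linarith)
    exact ((integrable_indicator_iff measurableSet_Ioo).mpr this).integrableOn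
  -- to volumeIoiPow
  have hb : Integrable (fun r : Set.Ioi (0:ℝ) => g r) (Measure.volumeIoiPow (p - 1)) := by
    rw [Measure.volumeIoiPow,
      integrable_withDensity_iff_integrable_smul'
        ((measurable_subtype_coe.pow_const _).ennreal_ofReal)
        (Filter.Eventually.of_forall fun r => ENNReal.ofReal_lt_top)]
    have h1' := h1
    rw [IntegrableOn, ← map_comap_subtype_coe measurableSet_Ioi,
      (MeasurableEmbedding.subtype_coe measurableSet_Ioi).integrable_map_iff] at h1'
    apply h1'.congr
    refine Filter.Eventually.of_forall fun r => ?_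
    simp only [Function.comp_apply, smul_eq_mul,
      ENNReal.toReal_ofReal (pow_nonneg (le_of_lt r.2) _)]
  -- to product
  have hprod : Integrable (fun z : Metric.sphere (0 : EuclideanSpace ℝ (Fin p)) 1 × Set.Ioi (0:ℝ) => g z.2)
      ((volume : Measure (EuclideanSpace ℝ (Fin p))).toSphere.prod
        (Measure.volumeIoiPow (Module.finrank ℝ (EuclideanSpace ℝ (Fin p)) - 1))) := by
    rw [hdim]
    have hmap : Integrable (fun r : Set.Ioi (0:ℝ) => g r)
        (Measure.map Prod.snd
          ((volume : Measure (EuclideanSpace ℝ (Fin p))).toSphere.prod (Measure.volumeIoiPow (p - 1)))) := by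
      rw [Measure.map_snd_prod]
      exact hb.smul_measure (measure_ne_top _ _)
    exact hmap.comp_measurable measurable_snd
  -- back to E
  have hcomap : Integrable (fun x : ({(0 : EuclideanSpace ℝ (Fin p))}ᶜ : Set (EuclideanSpace ℝ (Fin p))) => g ‖(x : EuclideanSpace ℝ (Fin p))‖)
      ((volume : Measure (EuclideanSpace ℝ (Fin p))).comap Subtype.val) := by
    have h := ((volume : Measure (EuclideanSpace ℝ (Fin p))).measurePreserving_homeomorphUnitSphereProd.integrable_comp_emb
      (Homeomorph.measurableEmbedding _)).mpr hprod
    refine h.congr (Filter.Eventually.of_forall fun x => ?_)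
    simp [Function.comp_apply, homeomorphUnitSphereProd_apply_snd_coe]
  have key : Integrable (fun x : EuclideanSpace ℝ (Fin p) => g ‖x‖) volume := by
    have h2 : Integrable (fun x : EuclideanSpace ℝ (Fin p) => g ‖x‖)
        ((volume : Measure (EuclideanSpace ℝ (Fin p))).restrict ({(0 : EuclideanSpace ℝ (Fin p))}ᶜ)) := by
      rw [← map_comap_subtype_coe (measurableSet_singleton (0 : EuclideanSpace ℝ (Fin p))).compl,
        (MeasurableEmbedding.subtype_coe (measurableSet_singleton (0 : EuclideanSpace ℝ (Fin p))).compl).integrable_map_iff]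
      exact hcomap
    rwa [MeasureTheory.restrict_compl_singleton] at h2
  -- conclude
  have h0ne : ∀ᵐ x : EuclideanSpace ℝ (Fin p) ∂(volume : Measure (EuclideanSpace ℝ (Fin p))), x ≠ 0 := by
    rw [ae_iff]
    simpa using measure_singleton (0 : EuclideanSpace ℝ (Fin p))
  have hae : (fun x : EuclideanSpace ℝ (Fin p) => g ‖x‖) =ᵐ[volume]
      Set.indicator (Metric.ball (0 : EuclideanSpace ℝ (Fin p)) 1) (fun x => ‖x‖ ^ s) := by
    filter_upwards [h0ne] with x hx
    by_cases hxb : x ∈ Metric.ball (0 : EuclideanSpace ℝ (Fin p)) 1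
    · rw [Set.indicator_of_mem hxb]
      exact hgr _ ⟨norm_pos_iff.2 hx, mem_ball_zero_iff.1 hxb⟩
    · rw [Set.indicator_of_notMem hxb]
      exact hgn _ (fun h => hxb (mem_ball_zero_iff.2 h.2))
  exact (integrable_indicator_iff measurableSet_ball).mp (key.congr hae)

lemma aux_int (p : ℕ) (hp : 1 ≤ p) (f : SchwartzMap (EuclideanSpace ℝ (Fin p)) ℂ)
    {s : ℝ} (hs : -(p : ℝ) < s) :
    Integrable (fun x : EuclideanSpace ℝ (Fin p) => ‖f x‖ * ‖x‖ ^ s) volume := by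
  have hmeas : AEStronglyMeasurable (fun x : EuclideanSpace ℝ (Fin p) => ‖f x‖ * ‖x‖ ^ s)
      volume :=
    f.continuous.norm.aestronglyMeasurable.mul (meas_norm_rpow s).aestronglyMeasurable
  rw [← integrableOn_univ, ← Set.union_compl_self (Metric.ball (0 : EuclideanSpace ℝ (Fin p)) 1)]
  apply IntegrableOn.union
  · -- on the unit ball: `f` is bounded
    obtain ⟨C, hC⟩ : ∃ C, ∀ x, ‖f x‖ ≤ C := by
      refine ⟨SchwartzMap.seminorm ℝ 0 0 f, fun x => ?_⟩
      have := SchwartzMap.le_seminorm ℝ 0 0 f x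
      simpa using this
    refine Integrable.mono' ((aux_ballInt p hp hs).const_mul C) hmeas.restrict ?_
    refine Filter.Eventually.of_forall fun x => ?_
    rw [Real.norm_of_nonneg (mul_nonneg (norm_nonneg _) (Real.rpow_nonneg (norm_nonneg _) _))]
    exact mul_le_mul_of_nonneg_right (hC x) (Real.rpow_nonneg (norm_nonneg _) _)
  · -- off the unit ball: polynomial decay of `f`
    set k : ℕ := ⌈s⌉₊ with hk
    refine Integrable.mono' ((f.integrable_pow_mul volume k).integrableOn) hmeas.restrict ?_
    rw [ae_restrict_iff' measurableSet_ball.compl]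
    refine Filter.Eventually.of_forall fun x hx => ?_
    have hx1 : 1 ≤ ‖x‖ := by
      simpa [mem_ball_zero_iff] using hx
    rw [Real.norm_of_nonneg (mul_nonneg (norm_nonneg _) (Real.rpow_nonneg (norm_nonneg _) _)),
      mul_comm (‖x‖ ^ k)]
    refine mul_le_mul_of_nonneg_left ?_ (norm_nonneg _)
    calc ‖x‖ ^ s ≤ ‖x‖ ^ (k : ℝ) :=
          Real.rpow_le_rpow_of_exponent_le hx1 (Nat.le_ceil s)
      _ = ‖x‖ ^ k := Real.rpow_natCast _ _

lemma aux_bound {r u a b ε : ℝ} (hr : 0 < r) (hε : 0 < ε) (hu1 : a + ε ≤ u) (hu2 : u ≤ b - ε) :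
    r ^ u * |Real.log r| ≤ (r ^ a + r ^ b) / ε := by
  rcases le_or_gt 1 r with h | h
  · have hlog : |Real.log r| ≤ r ^ ε / ε := by
      rw [_root_.abs_of_nonneg (Real.log_nonneg h)]
      exact Real.log_le_rpow_div (zero_le_one.trans h) hε
    have h2 : r ^ u ≤ r ^ (b - ε) := Real.rpow_le_rpow_of_exponent_le h hu2
    calc r ^ u * |Real.log r| ≤ r ^ (b - ε) * (r ^ ε / ε) :=
          mul_le_mul h2 hlog (abs_nonneg _) (Real.rpow_nonneg hr.le _)
      _ = r ^ b / ε := by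
          rw [div_eq_mul_inv, div_eq_mul_inv, ← mul_assoc, ← Real.rpow_add hr, sub_add_cancel]
      _ ≤ (r ^ a + r ^ b) / ε := by
          gcongr
          nlinarith [Real.rpow_nonneg hr.le a]
  · have hlog : |Real.log r| ≤ r ^ (-ε) / ε := by
      rw [_root_.abs_of_nonpos (Real.log_nonpos hr.le h.le), ← Real.log_inv]
      have h3 := Real.log_le_rpow_div (inv_nonneg.2 hr.le) hε
      rwa [Real.inv_rpow hr.le, ← Real.rpow_neg hr.le] at h3
    have h2 : r ^ u ≤ r ^ (a + ε) := Real.rpow_le_rpow_of_exponent_ge hr h.le hu1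
    calc r ^ u * |Real.log r| ≤ r ^ (a + ε) * (r ^ (-ε) / ε) :=
          mul_le_mul h2 hlog (abs_nonneg _) (Real.rpow_nonneg hr.le _)
      _ = r ^ a / ε := by
          rw [div_eq_mul_inv, div_eq_mul_inv, ← mul_assoc, ← Real.rpow_add hr, add_neg_cancel_right]
      _ ≤ (r ^ a + r ^ b) / ε := by
          gcongr
          nlinarith [Real.rpow_nonneg hr.le b]

/-- For a Schwartz function `f` on `ℝ^p`, the zeta integral
`Z(f,t) = ∫ f(x) ‖x‖^t dx` converges absolutely for `Re t > -p`, and is a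
holomorphic function of `t` on that half-plane. -/
theorem stmt1 (p : ℕ) (hp : 1 ≤ p) (f : SchwartzMap (EuclideanSpace ℝ (Fin p)) ℂ) :
    (∀ t : ℂ, -(p : ℝ) < t.re →
      Integrable (fun x : EuclideanSpace ℝ (Fin p) => f x * (‖x‖ : ℂ) ^ t) volume) ∧
    DifferentiableOn ℂ
      (fun t : ℂ => ∫ x : EuclideanSpace ℝ (Fin p), f x * (‖x‖ : ℂ) ^ t)
      {t : ℂ | -(p : ℝ) < t.re} := by
  haveI : Nontrivial (EuclideanSpace ℝ (Fin p)) :=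
    Module.nontrivial_of_finrank_pos (R := ℝ)
      (by rw [finrank_euclideanSpace_fin]; omega)
  have h0ne : ∀ᵐ x : EuclideanSpace ℝ (Fin p) ∂volume, x ≠ 0 := by
    rw [ae_iff]
    simpa using measure_singleton (0 : EuclideanSpace ℝ (Fin p))
  have hint : ∀ t : ℂ, -(p : ℝ) < t.re →
      Integrable (fun x : EuclideanSpace ℝ (Fin p) => f x * (‖x‖ : ℂ) ^ t) volume := by
    intro t ht
    refine Integrable.mono' (aux_int p hp f ht)
      (f.continuous.aestronglyMeasurable.mul (meas_norm_cpow t).aestronglyMeasurable) ?_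
    filter_upwards [h0ne] with x hx
    rw [norm_mul, norm_cpow_eq_rpow_re_of_pos (norm_pos_iff.2 hx)]
  refine ⟨hint, ?_⟩
  intro t₀ ht₀
  simp only [Set.mem_setOf_eq] at ht₀
  set ε : ℝ := (t₀.re + p) / 3 with hε_def
  have hε : 0 < ε := by rw [hε_def]; linarith
  have ha : -(p : ℝ) < t₀.re - 2 * ε := by rw [hε_def]; linarith
  have hb : -(p : ℝ) < t₀.re + 2 * ε := by linarith
  have bound_int : Integrable (fun x : EuclideanSpace ℝ (Fin p) =>
      (‖f x‖ * ‖x‖ ^ (t₀.re - 2 * ε) + ‖f x‖ * ‖x‖ ^ (t₀.re + 2 * ε)) / ε) volume :=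
    ((aux_int p hp f ha).add (aux_int p hp f hb)).div_const ε
  have hlogm : Measurable fun x : EuclideanSpace ℝ (Fin p) => Complex.log (‖x‖ : ℂ) :=
    (Complex.measurable_ofReal.comp measurable_norm).clog
  have key := hasDerivAt_integral_of_dominated_loc_of_deriv_le (μ := volume)
    (F := fun (t : ℂ) (x : EuclideanSpace ℝ (Fin p)) => f x * (‖x‖ : ℂ) ^ t)
    (F' := fun (t : ℂ) (x : EuclideanSpace ℝ (Fin p)) =>
      f x * ((‖x‖ : ℂ) ^ t * Complex.log (‖x‖ : ℂ)))
    (x₀ := t₀) (ball_mem_nhds t₀ hε)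
    (Filter.Eventually.of_forall fun t =>
      f.continuous.aestronglyMeasurable.mul (meas_norm_cpow t).aestronglyMeasurable)
    (hint t₀ ht₀)
    (f.continuous.aestronglyMeasurable.mul
      ((meas_norm_cpow t₀).mul hlogm).aestronglyMeasurable)
    ?_ bound_int ?_
  · exact key.2.differentiableAt.differentiableWithinAt
  · -- bound
    filter_upwards [h0ne] with x hx t htb
    have hr : 0 < ‖x‖ := norm_pos_iff.2 hx
    have hnorm : ‖f x * ((‖x‖ : ℂ) ^ t * Complex.log (‖x‖ : ℂ))‖
        = ‖f x‖ * (‖x‖ ^ t.re * |Real.log ‖x‖|) := by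
      rw [norm_mul, norm_mul,
        norm_cpow_eq_rpow_re_of_pos hr, ← Complex.ofReal_log (norm_nonneg x),
        Complex.norm_real, Real.norm_eq_abs]
    have hdist : |t.re - t₀.re| < ε := by
      have h1 : |(t - t₀).re| ≤ ‖t - t₀‖ := Complex.abs_re_le_norm _
      have h2 : ‖t - t₀‖ < ε := by rwa [mem_ball, Complex.dist_eq] at htb
      simpa [Complex.sub_re] using h1.trans_lt h2
    rw [abs_lt] at hdist
    rw [hnorm]
    calc ‖f x‖ * (‖x‖ ^ t.re * |Real.log ‖x‖|)
        ≤ ‖f x‖ * ((‖x‖ ^ (t₀.re - 2 * ε) + ‖x‖ ^ (t₀.re + 2 * ε)) / ε) :=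
          mul_le_mul_of_nonneg_left
            (aux_bound hr hε (by linarith) (by linarith)) (norm_nonneg _)
      _ = (‖f x‖ * ‖x‖ ^ (t₀.re - 2 * ε) + ‖f x‖ * ‖x‖ ^ (t₀.re + 2 * ε)) / ε := by
          ring
  · -- differentiability
    filter_upwards [h0ne] with x hx t htb
    have hne : (‖x‖ : ℂ) ≠ 0 := Complex.ofReal_ne_zero.mpr (norm_ne_zero_iff.2 hx)
    exact ((hasStrictDerivAt_const_cpow (Or.inl hne)).hasDerivAt).const_mul (f x)
end

section
/- Let n ≥ 1 and let d, e be nonnegative integers; set μ = d(n−1) + (e+1). Let σ, τ ∈ ℂ satisfy −(e+1) < Re(τ) < Re(σ) − d(n−1). Then the integral ∫_Ω ∏_{j=1}^n x_j^{τ+e} (1+x_j²)^{−(σ+μ)/2} ∏_{1≤i<j≤n} (x_i² − x_j²)^d dx_1⋯dx_n over the cone Ω = {(x_1,…,x_n) ∈ ℝ^n : x_1 > x_2 > ⋯ > x_n > 0} converges absolutely. -/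
open MeasureTheory Complex

lemma oned {a b : ℝ} (ha : -1 < a) (hab : a - 2*b < -1) (hb : 0 ≤ b) :
    IntegrableOn (fun t : ℝ => t ^ a * (1 + t^2) ^ (-b)) (Set.Ioi 0) := by
  have hmeas : Measurable (fun t : ℝ => t ^ a * (1 + t^2) ^ (-b)) := by fun_prop
  have hsub : Set.Ioi (0:ℝ) ⊆ Set.Ioc 0 1 ∪ Set.Ioi 1 := by
    intro t ht
    rcases le_or_gt t 1 with h | h
    · exact Or.inl ⟨ht, h⟩
    · exact Or.inr h
  refine IntegrableOn.mono_set (IntegrableOn.union ?_ ?_) hsub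
  · have h1 : IntegrableOn (fun t : ℝ => t ^ a) (Set.Ioc (0:ℝ) 1) := by
      have := intervalIntegral.intervalIntegrable_rpow' (a := (0:ℝ)) (b := 1) ha
      rwa [intervalIntegrable_iff_integrableOn_Ioc_of_le zero_le_one] at this
    refine Integrable.mono' h1 (hmeas.aestronglyMeasurable) ?_
    filter_upwards [ae_restrict_of_forall_mem measurableSet_Ioc
      (fun t (ht : t ∈ Set.Ioc (0:ℝ) 1) => ht)] with t ht
    have ht0 : (0:ℝ) < t := ht.1
    have h1t : (1:ℝ) ≤ 1 + t^2 := by nlinarith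
    have hle : (1 + t^2) ^ (-b) ≤ 1 :=
      Real.rpow_le_one_of_one_le_of_nonpos h1t (by linarith)
    rw [Real.norm_eq_abs, _root_.abs_of_nonneg (by positivity)]
    calc t ^ a * (1 + t^2) ^ (-b) ≤ t ^ a * 1 :=
          mul_le_mul_of_nonneg_left hle (by positivity)
      _ = t ^ a := mul_one _
  · have h2 : IntegrableOn (fun t : ℝ => t ^ (a - 2*b)) (Set.Ioi 1) :=
      integrableOn_Ioi_rpow_of_lt hab one_pos
    refine Integrable.mono' h2 (hmeas.aestronglyMeasurable) ?_
    filter_upwards [ae_restrict_of_forall_mem measurableSet_Ioi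
      (fun t (ht : t ∈ Set.Ioi (1:ℝ)) => ht)] with t ht
    have ht1 : (1:ℝ) < t := ht
    have ht0 : (0:ℝ) < t := by linarith
    have hle : (1 + t^2) ^ (-b) ≤ (t^2) ^ (-b) :=
      Real.rpow_le_rpow_of_nonpos (by positivity) (by nlinarith) (by linarith)
    have heq : (t^2 : ℝ) ^ (-b) = t ^ (-(2*b)) := by
      rw [← Real.rpow_natCast t 2, ← Real.rpow_mul ht0.le]
      norm_num
    rw [Real.norm_eq_abs, _root_.abs_of_nonneg (by positivity)]
    calc t ^ a * (1 + t^2) ^ (-b) ≤ t ^ a * t ^ (-(2*b)) := by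
          rw [← heq]; exact mul_le_mul_of_nonneg_left hle (by positivity)
      _ = t ^ (a - 2*b) := by rw [← Real.rpow_add ht0]; ring_nf

/-- Absolute convergence of the polar-coordinates zeta integral for the spherical vector:
for `−(e+1) < Re τ < Re σ − d(n−1)` and `μ = d(n−1)+(e+1)`, the integral over the cone
`x₁ > x₂ > ⋯ > xₙ > 0` of `∏ⱼ xⱼ^(τ+e) (1+xⱼ²)^(−(σ+μ)/2) ∏_{i<j} (xᵢ²−xⱼ²)^d`
converges absolutely. -/
theorem stmt4 (n : ℕ) (hn : 1 ≤ n) (d e : ℕ) (μ : ℝ)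
    (hμ : μ = (d : ℝ) * ((n : ℝ) - 1) + ((e : ℝ) + 1))
    (σ τ : ℂ) (h₁ : -((e : ℝ) + 1) < τ.re) (h₂ : τ.re < σ.re - (d : ℝ) * ((n : ℝ) - 1)) :
    IntegrableOn
      (fun x : Fin n → ℝ =>
        (∏ j : Fin n, (x j : ℂ) ^ (τ + (e : ℂ)) *
            ((1 + (x j) ^ 2 : ℝ) : ℂ) ^ (-(σ + (μ : ℂ)) / 2)) *
          ∏ i : Fin n, ∏ j ∈ Finset.Ioi i, (((x i) ^ 2 - (x j) ^ 2 : ℝ) : ℂ) ^ (d : ℕ))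
      {x : Fin n → ℝ | (∀ i j : Fin n, i < j → x j < x i) ∧ ∀ j : Fin n, 0 < x j}
      volume := by
  classical
  set b : ℝ := (σ.re + μ) / 2 with hbdef
  set S : Set (Fin n → ℝ) :=
    {x : Fin n → ℝ | (∀ i j : Fin n, i < j → x j < x i) ∧ ∀ j : Fin n, 0 < x j} with hSdef
  set F : (Fin n → ℝ) → ℂ := fun x =>
    (∏ j : Fin n, (x j : ℂ) ^ (τ + (e : ℂ)) *
        ((1 + (x j) ^ 2 : ℝ) : ℂ) ^ (-(σ + (μ : ℂ)) / 2)) *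
      ∏ i : Fin n, ∏ j ∈ Finset.Ioi i, (((x i) ^ 2 - (x j) ^ 2 : ℝ) : ℂ) ^ (d : ℕ) with hFdef
  have hn1 : (1:ℝ) ≤ (n:ℝ) := by exact_mod_cast hn
  have hdn : (0:ℝ) ≤ (d : ℝ) * ((n : ℝ) - 1) :=
    mul_nonneg (Nat.cast_nonneg d) (by linarith)
  have hb0 : 0 ≤ b := by rw [hbdef, hμ]; nlinarith
  -- the exponents
  set a : Fin n → ℝ := fun j => τ.re + e + 2 * ((d:ℝ) * ((Finset.Ioi j).card : ℝ)) with hadef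
  have hcard : ∀ j : Fin n, ((Finset.Ioi j).card : ℝ) ≤ (n:ℝ) - 1 := by
    intro j
    have h1 : (Finset.Ioi j).card ≤ n - 1 := by rw [Fin.card_Ioi]; omega
    have h2 : ((n - 1 : ℕ) : ℝ) = (n:ℝ) - 1 := by
      rw [Nat.cast_sub hn]; norm_num
    calc ((Finset.Ioi j).card : ℝ) ≤ ((n - 1 : ℕ) : ℝ) := by exact_mod_cast h1
      _ = (n:ℝ) - 1 := h2
  have hcard0 : ∀ j : Fin n, (0:ℝ) ≤ ((Finset.Ioi j).card : ℝ) := fun j => Nat.cast_nonneg _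
  have ha : ∀ j : Fin n, -1 < a j := by
    intro j
    have := mul_nonneg (Nat.cast_nonneg (α := ℝ) d) (hcard0 j)
    simp only [hadef]
    linarith
  have hab : ∀ j : Fin n, a j - 2 * b < -1 := by
    intro j
    have hd0 : (0:ℝ) ≤ (d:ℝ) := Nat.cast_nonneg d
    have := mul_le_mul_of_nonneg_left (hcard j) hd0
    simp only [hadef, hbdef]
    rw [hμ] at *
    nlinarith
  -- dominating function
  set g : Fin n → ℝ → ℝ := fun j =>
    Set.indicator (Set.Ioi 0) (fun t => t ^ (a j) * (1 + t^2) ^ (-b)) with hgdef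
  have hg : ∀ j, Integrable (g j) := fun j =>
    (integrable_indicator_iff measurableSet_Ioi).2 (oned (ha j) (hab j) hb0)
  have hG : Integrable (fun x : Fin n → ℝ => ∏ j, g j (x j)) :=
    Integrable.fintype_prod hg
  -- openness of the cone
  have hSopen : IsOpen S := by
    have hS' : S = (⋂ (i : Fin n), ⋂ (j : Fin n), ⋂ (_ : i < j), {x : Fin n → ℝ | x j < x i}) ∩
        ⋂ (j : Fin n), {x : Fin n → ℝ | 0 < x j} := by
      ext x
      simp only [hSdef, Set.mem_setOf_eq, Set.mem_inter_iff, Set.mem_iInter]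
    rw [hS']
    exact (isOpen_iInter_of_finite fun i => isOpen_iInter_of_finite fun j =>
        isOpen_iInter_of_finite fun _ =>
          isOpen_lt (continuous_apply j) (continuous_apply i)).inter
      (isOpen_iInter_of_finite fun j => isOpen_lt continuous_const (continuous_apply j))
  -- continuity on the cone
  have hcont : ContinuousOn F S := by
    apply ContinuousOn.mul
    · apply continuousOn_finset_prod
      intro j _
      apply ContinuousOn.mul
      · intro x hx
        refine ContinuousAt.continuousWithinAt ?_
        exact ContinuousAt.comp (f := fun p : Fin n → ℝ => p j)
          (continuousAt_ofReal_cpow_const (x j) _ (Or.inr (ne_of_gt (hx.2 j))))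
          (continuous_apply j).continuousAt
      · intro x hx
        exact ((continuousAt_ofReal_cpow_const _ _
          (Or.inr (by positivity))).comp
          ((continuous_const.add ((continuous_apply j).pow 2)).continuousAt)).continuousWithinAt
    · apply Continuous.continuousOn
      apply continuous_finset_prod
      intro i _
      apply continuous_finset_prod
      intro j _
      exact (Complex.continuous_ofReal.comp
        (((continuous_apply i).pow 2).sub ((continuous_apply j).pow 2))).pow d
  -- the real part of the second exponent
  have hre : (-(σ + (μ:ℂ)) / 2).re = -b := by
    rw [hbdef]
    simp [Complex.div_re]
    ring
  -- key pointwise bound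
  have key : ∀ x ∈ S, ‖F x‖ ≤ ∏ j, g j (x j) := by
    rintro x ⟨hx1, hx2⟩
    have hnorm : ‖F x‖ = (∏ j, (x j) ^ (τ.re + (e:ℝ)) * (1 + (x j)^2) ^ (-b)) *
        ∏ i, ∏ j ∈ Finset.Ioi i, ((x i)^2 - (x j)^2)^(d:ℕ) := by
      rw [hFdef]
      rw [norm_mul, norm_prod]
      congr 1
      · refine Finset.prod_congr rfl fun j _ => ?_
        rw [norm_mul,
          Complex.norm_cpow_eq_rpow_re_of_pos (hx2 j),
          Complex.norm_cpow_eq_rpow_re_of_pos (by positivity), hre,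
          Complex.add_re, Complex.natCast_re]
      · rw [norm_prod]
        refine Finset.prod_congr rfl fun i _ => ?_
        rw [norm_prod]
        refine Finset.prod_congr rfl fun j hj => ?_
        have hji : x j < x i := hx1 i j (Finset.mem_Ioi.1 hj)
        rw [norm_pow, Complex.norm_real, Real.norm_eq_abs,
          _root_.abs_of_nonneg (sub_nonneg.2 (pow_le_pow_left₀ (hx2 j).le hji.le 2))]
    have step1 : ∏ i, ∏ j ∈ Finset.Ioi i, ((x i)^2 - (x j)^2)^(d:ℕ) ≤
        ∏ i : Fin n, (x i) ^ (2*d*(Finset.Ioi i).card) := by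
      refine Finset.prod_le_prod (fun i _ => Finset.prod_nonneg fun j hj =>
        pow_nonneg (sub_nonneg.2 (pow_le_pow_left₀ (hx2 j).le
          (hx1 i j (Finset.mem_Ioi.1 hj)).le 2)) d) (fun i _ => ?_)
      calc ∏ j ∈ Finset.Ioi i, ((x i)^2 - (x j)^2)^(d:ℕ)
          ≤ ∏ j ∈ Finset.Ioi i, ((x i)^2)^(d:ℕ) := by
            refine Finset.prod_le_prod (fun j hj => pow_nonneg (sub_nonneg.2
              (pow_le_pow_left₀ (hx2 j).le (hx1 i j (Finset.mem_Ioi.1 hj)).le 2)) d)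
              (fun j hj => pow_le_pow_left₀ (sub_nonneg.2
              (pow_le_pow_left₀ (hx2 j).le (hx1 i j (Finset.mem_Ioi.1 hj)).le 2))
              (sub_le_self _ (sq_nonneg (x j))) d)
        _ = (x i) ^ (2*d*(Finset.Ioi i).card) := by
            rw [Finset.prod_const, ← pow_mul, ← pow_mul, mul_assoc]
    calc ‖F x‖ = (∏ j, (x j) ^ (τ.re + (e:ℝ)) * (1 + (x j)^2) ^ (-b)) *
        ∏ i, ∏ j ∈ Finset.Ioi i, ((x i)^2 - (x j)^2)^(d:ℕ) := hnorm
      _ ≤ (∏ j, (x j) ^ (τ.re + (e:ℝ)) * (1 + (x j)^2) ^ (-b)) *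
          ∏ i : Fin n, (x i) ^ (2*d*(Finset.Ioi i).card) :=
        mul_le_mul_of_nonneg_left step1 (Finset.prod_nonneg fun j _ =>
          mul_nonneg (Real.rpow_nonneg (hx2 j).le _) (Real.rpow_nonneg (by positivity) _))
      _ = ∏ j, ((x j) ^ (τ.re + (e:ℝ)) * (1 + (x j)^2) ^ (-b) *
          (x j) ^ (2*d*(Finset.Ioi j).card)) := (Finset.prod_mul_distrib).symm
      _ = ∏ j, g j (x j) := by
        refine Finset.prod_congr rfl fun j _ => ?_
        rw [hgdef]
        simp only
        rw [Set.indicator_of_mem (Set.mem_Ioi.2 (hx2 j))]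
        rw [← Real.rpow_natCast (x j) (2*d*(Finset.Ioi j).card), mul_right_comm,
          ← Real.rpow_add (hx2 j)]
        congr 2
        rw [hadef]
        push_cast
        ring
  -- conclude
  rw [IntegrableOn]
  refine Integrable.mono' (hG.restrict (s := S))
    (hcont.aestronglyMeasurable hSopen.measurableSet) ?_
  exact ae_restrict_of_forall_mem hSopen.measurableSet key
end

section
/- Let n ≥ 1 and let σ ∈ ℝ. The function h_σ(X) = det(I_n + XᵀX)^{−(σ+n)/2} on the space M_n(ℝ) of n×n real matrices is integrable with respect to Lebesgue measure whenever σ > n − 1, and is square-integrable whenever σ > −1/2. -/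
open MeasureTheory Matrix

open scoped ENNReal NNReal

namespace Stmt6Aux

noncomputable section

variable {n m : ℕ}

lemma posDef_one_add_mul_transpose (A : Matrix (Fin m) (Fin n) ℝ) :
    (1 + A * Aᵀ).PosDef := by
  have h : (A * Aᵀ).PosSemidef := by
    simpa [Matrix.conjTranspose_eq_transpose_of_trivial] using
      Matrix.posSemidef_self_mul_conjTranspose A
  exact Matrix.PosDef.one.add_posSemidef h

lemma posDef_one_add_transpose_mul (A : Matrix (Fin m) (Fin n) ℝ) :
    (1 + Aᵀ * A).PosDef := by
  simpa using posDef_one_add_mul_transpose Aᵀ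

lemma psd_det_nonneg {k : ℕ} {S : Matrix (Fin k) (Fin k) ℝ} (hS : S.PosSemidef) :
    0 ≤ S.det := by
  rw [hS.isHermitian.det_eq_prod_eigenvalues]
  exact Finset.prod_nonneg fun i _ => by exact_mod_cast hS.eigenvalues_nonneg i

lemma gram_cons (v : Fin n → ℝ) (Y : Fin m → Fin n → ℝ) :
    (Matrix.of (Fin.insertNth (0 : Fin (m+1)) v Y))ᵀ * Matrix.of (Fin.insertNth (0 : Fin (m+1)) v Y)
      = (Matrix.of Y)ᵀ * Matrix.of Y + Matrix.replicateCol Unit v * Matrix.replicateRow Unit v := by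
  ext a b
  simp only [Matrix.mul_apply, Matrix.transpose_apply, Matrix.of_apply, Matrix.add_apply,
    Matrix.replicateCol_apply, Matrix.replicateRow_apply, Finset.univ_unique, Finset.sum_const,
    Finset.card_singleton, one_smul]
  rw [Fin.sum_univ_succAbove _ (0 : Fin (m+1))]
  simp [Fin.insertNth_apply_same, Fin.insertNth_apply_succAbove, add_comm]

lemma det_gram_cons (v : Fin n → ℝ) (Y : Fin m → Fin n → ℝ) :
    (1 + Matrix.of (Fin.insertNth (0 : Fin (m+1)) v Y) *
        (Matrix.of (Fin.insertNth (0 : Fin (m+1)) v Y))ᵀ).det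
      = (1 + Matrix.of Y * (Matrix.of Y)ᵀ).det *
        (1 + v ⬝ᵥ ((1 + (Matrix.of Y)ᵀ * Matrix.of Y)⁻¹ *ᵥ v)) := by
  have hApd := posDef_one_add_transpose_mul (Matrix.of Y)
  rw [Matrix.det_one_add_mul_comm, gram_cons, ← add_assoc,
    Matrix.det_add_replicateCol_mul_replicateRow hApd.det_pos.ne'.isUnit v v]
  congr 1
  · exact Matrix.det_one_add_mul_comm _ _
  · rw [Matrix.det_unique]
    simp only [Matrix.add_apply, Matrix.one_apply_eq, Matrix.mul_apply, Matrix.replicateRow_apply,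
      Matrix.replicateCol_apply, dotProduct, Matrix.mulVec, Finset.univ_unique, Finset.sum_const,
      Finset.card_singleton, one_smul]
    congr 1
    simp only [Finset.sum_mul, Finset.mul_sum]
    rw [Finset.sum_comm]
    apply Finset.sum_congr rfl
    intro j _
    apply Finset.sum_congr rfl
    intro i _
    ring

open scoped MatrixOrder in
lemma lintegral_quadratic (A : Matrix (Fin n) (Fin n) ℝ) (hA : A.PosDef) (s : ℝ) :
    ∫⁻ v : Fin n → ℝ, ENNReal.ofReal ((1 + v ⬝ᵥ (A⁻¹ *ᵥ v)) ^ (-s))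
      = ENNReal.ofReal (A.det ^ (1/2 : ℝ)) *
        ∫⁻ u : Fin n → ℝ, ENNReal.ofReal ((1 + u ⬝ᵥ u) ^ (-s)) := by
  classical
  set S := CFC.sqrt A with hSdef
  have hSS : S * S = A := CFC.sqrt_mul_sqrt_self A hA.posSemidef.nonneg
  have hdet2 : S.det * S.det = A.det := by rw [← Matrix.det_mul, hSS]
  have hdet_nonneg : 0 ≤ S.det := psd_det_nonneg (CFC.sqrt_nonneg A).posSemidef
  have hdetA : 0 < A.det := hA.det_pos
  have hSdet_pos : 0 < S.det := by
    rcases lt_or_eq_of_le hdet_nonneg with h | h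
    · exact h
    · exfalso; rw [← h] at hdet2; simp at hdet2; linarith
  have hSdet_val : S.det = A.det ^ (1/2 : ℝ) := by
    rw [← Real.sqrt_eq_rpow, ← hdet2, Real.sqrt_mul_self hdet_nonneg]
  have hSym : Sᵀ = S := by
    have := (CFC.sqrt_nonneg A).posSemidef.isHermitian
    rwa [Matrix.IsHermitian, Matrix.conjTranspose_eq_transpose_of_trivial] at this
  -- positivity of quadratic form of A⁻¹
  have hq_nonneg : ∀ v : Fin n → ℝ, 0 ≤ v ⬝ᵥ (A⁻¹ *ᵥ v) := by
    intro v
    have := hA.inv.posSemidef.dotProduct_mulVec_nonneg v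
    simpa using this
  have hq_cont : Continuous fun v : Fin n → ℝ => 1 + v ⬝ᵥ (A⁻¹ *ᵥ v) := by
    apply continuous_const.add
    unfold dotProduct Matrix.mulVec
    exact continuous_finset_sum _ fun i _ => (continuous_apply i).mul
      (continuous_finset_sum _ fun j _ => continuous_const.mul (continuous_apply j))
  have hf_meas : Measurable fun v : Fin n → ℝ =>
      ENNReal.ofReal ((1 + v ⬝ᵥ (A⁻¹ *ᵥ v)) ^ (-s)) := by
    apply Measurable.ennreal_ofReal
    exact (hq_cont.rpow_const fun v =>
      Or.inl (by linarith [hq_nonneg v] : (0:ℝ) < 1 + v ⬝ᵥ (A⁻¹ *ᵥ v)).ne').measurable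
  -- the key algebraic identity
  have key : ∀ u : Fin n → ℝ, (S *ᵥ u) ⬝ᵥ (A⁻¹ *ᵥ (S *ᵥ u)) = u ⬝ᵥ u := by
    intro u
    have hAinv : A⁻¹ = S⁻¹ * S⁻¹ := by rw [← hSS, Matrix.mul_inv_rev]
    have hm : S * (A⁻¹ * S) = 1 := by
      rw [hAinv, Matrix.mul_assoc, Matrix.nonsing_inv_mul S hSdet_pos.ne'.isUnit,
        Matrix.mul_one, Matrix.mul_nonsing_inv S hSdet_pos.ne'.isUnit]
    have hvm : S *ᵥ u = u ᵥ* S := by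
      conv_lhs => rw [← hSym]
      rw [Matrix.mulVec_transpose]
    calc (S *ᵥ u) ⬝ᵥ (A⁻¹ *ᵥ (S *ᵥ u))
        = (u ᵥ* S) ⬝ᵥ ((A⁻¹ * S) *ᵥ u) := by rw [Matrix.mulVec_mulVec, hvm]
      _ = u ⬝ᵥ (S *ᵥ ((A⁻¹ * S) *ᵥ u)) := (Matrix.dotProduct_mulVec _ _ _).symm
      _ = u ⬝ᵥ u := by rw [Matrix.mulVec_mulVec, hm, Matrix.one_mulVec]
  -- change of variables
  have hT_meas : Measurable (Matrix.toLin' S) :=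
    (LinearMap.continuous_of_finiteDimensional _).measurable
  have hmap := Real.map_matrix_volume_pi_eq_smul_volume_pi (M := S) hSdet_pos.ne'
  have h1 : ∫⁻ u : Fin n → ℝ, ENNReal.ofReal
        ((1 + (Matrix.toLin' S u) ⬝ᵥ (A⁻¹ *ᵥ (Matrix.toLin' S u))) ^ (-s))
      = ENNReal.ofReal |S.det⁻¹| * ∫⁻ v : Fin n → ℝ,
          ENNReal.ofReal ((1 + v ⬝ᵥ (A⁻¹ *ᵥ v)) ^ (-s)) := by
    rw [← lintegral_map hf_meas hT_meas, hmap, lintegral_smul_measure, smul_eq_mul]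
  have h2 : ∀ u : Fin n → ℝ,
      ENNReal.ofReal ((1 + (Matrix.toLin' S u) ⬝ᵥ (A⁻¹ *ᵥ (Matrix.toLin' S u))) ^ (-s))
        = ENNReal.ofReal ((1 + u ⬝ᵥ u) ^ (-s)) := by
    intro u
    rw [Matrix.toLin'_apply, key]
  rw [lintegral_congr h2] at h1
  have hc : ENNReal.ofReal |S.det⁻¹| = (ENNReal.ofReal (A.det ^ (1/2 : ℝ)))⁻¹ := by
    rw [abs_inv, abs_of_pos hSdet_pos, ENNReal.ofReal_inv_of_pos hSdet_pos, hSdet_val]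
  rw [hc] at h1
  have hne : ENNReal.ofReal (A.det ^ (1/2 : ℝ)) ≠ 0 := by
    simp only [ne_eq, ENNReal.ofReal_eq_zero, not_le]
    positivity
  have hnt : ENNReal.ofReal (A.det ^ (1/2 : ℝ)) ≠ ⊤ := ENNReal.ofReal_ne_top
  rw [h1, ← mul_assoc, ENNReal.mul_inv_cancel hne hnt, one_mul]

lemma base_lintegral_lt_top {s : ℝ} (hs : (n : ℝ) < 2 * s) :
    ∫⁻ u : Fin n → ℝ, ENNReal.ofReal ((1 + u ⬝ᵥ u) ^ (-s)) < ⊤ := by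
  have hs0 : 0 < s := by
    have : (0:ℝ) ≤ n := Nat.cast_nonneg n
    linarith
  have hfin : (Module.finrank ℝ (Fin n → ℝ) : ℝ) < 2 * s := by
    rwa [Module.finrank_fin_fun]
  have hint : Integrable (fun u : Fin n → ℝ => ((1 : ℝ) + ‖u‖ ^ 2) ^ (-(2*s) / 2)) :=
    integrable_rpow_neg_one_add_norm_sq hfin
  have hdot_nonneg : ∀ u : Fin n → ℝ, 0 ≤ u ⬝ᵥ u := fun u =>
    Finset.sum_nonneg fun i _ => mul_self_nonneg _
  have hnorm_sq : ∀ u : Fin n → ℝ, ‖u‖ ^ 2 ≤ u ⬝ᵥ u := by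
    intro u
    have h1 : ‖u‖ ≤ Real.sqrt (u ⬝ᵥ u) := by
      rw [pi_norm_le_iff_of_nonneg (Real.sqrt_nonneg _)]
      intro i
      rw [Real.norm_eq_abs, ← Real.sqrt_sq_eq_abs]
      apply Real.sqrt_le_sqrt
      have : u i ^ 2 = u i * u i := sq (u i) ▸ by ring
      rw [this]
      exact Finset.single_le_sum (f := fun j => u j * u j)
        (fun j _ => mul_self_nonneg _) (Finset.mem_univ i)
    calc ‖u‖ ^ 2 ≤ Real.sqrt (u ⬝ᵥ u) ^ 2 := by
          exact pow_le_pow_left₀ (norm_nonneg _) h1 2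
      _ = u ⬝ᵥ u := Real.sq_sqrt (hdot_nonneg u)
  have hmono : ∀ u : Fin n → ℝ,
      (1 + u ⬝ᵥ u) ^ (-s) ≤ ((1 : ℝ) + ‖u‖ ^ 2) ^ (-(2*s) / 2) := by
    intro u
    have he : -(2*s) / 2 = -s := by ring
    rw [he]
    apply Real.rpow_le_rpow_of_nonpos (by positivity) (by linarith [hnorm_sq u])
    linarith
  calc ∫⁻ u : Fin n → ℝ, ENNReal.ofReal ((1 + u ⬝ᵥ u) ^ (-s))
      ≤ ∫⁻ u : Fin n → ℝ, ENNReal.ofReal (((1 : ℝ) + ‖u‖ ^ 2) ^ (-(2*s) / 2)) :=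
        lintegral_mono fun u => ENNReal.ofReal_le_ofReal (hmono u)
    _ < ⊤ := hint.lintegral_lt_top

lemma gram_det_cont (k : ℕ) :
    Continuous fun X : Fin k → Fin n → ℝ => (1 + Matrix.of X * (Matrix.of X)ᵀ).det := by
  have h1 : Continuous fun X : Fin k → Fin n → ℝ => (Matrix.of X : Matrix (Fin k) (Fin n) ℝ) :=
    continuous_id
  exact (continuous_const.add (h1.matrix_mul h1.matrix_transpose)).matrix_det

lemma gram_det_pos {k : ℕ} (X : Fin k → Fin n → ℝ) :
    0 < (1 + Matrix.of X * (Matrix.of X)ᵀ).det :=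
  (posDef_one_add_mul_transpose (Matrix.of X)).det_pos

lemma sph_meas {k : ℕ} (s : ℝ) :
    Measurable fun X : Fin k → Fin n → ℝ =>
      ENNReal.ofReal ((1 + Matrix.of X * (Matrix.of X)ᵀ).det ^ (-s)) :=
  (((gram_det_cont k).rpow_const fun X =>
    Or.inl (gram_det_pos X).ne').measurable).ennreal_ofReal

set_option maxHeartbeats 1000000 in
lemma sphInt_lt_top (n : ℕ) : ∀ (m : ℕ) (s : ℝ), (n + m : ℝ) - 1 < 2 * s → 1 ≤ n →
    (∫⁻ X : Fin m → Fin n → ℝ,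
      ENNReal.ofReal ((1 + Matrix.of X * (Matrix.of X)ᵀ).det ^ (-s))) < ⊤ := by
  intro m
  induction m with
  | zero =>
    intro s hs hn
    have h0 : ∀ X : Fin 0 → Fin n → ℝ,
        ENNReal.ofReal ((1 + Matrix.of X * (Matrix.of X)ᵀ).det ^ (-s)) = 1 := by
      intro X
      have : (1 + Matrix.of X * (Matrix.of X)ᵀ).det = 1 := Matrix.det_fin_zero
      rw [this, Real.one_rpow, ENNReal.ofReal_one]
    rw [lintegral_congr h0, lintegral_one]
    rw [show (volume : Measure (Fin 0 → Fin n → ℝ)) = Measure.pi fun _ => volume from rfl,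
      Measure.pi_univ]
    simp
  | succ m ih =>
    intro s hs hn
    have hs' : (n : ℝ) < 2 * s := by
      push_cast at hs
      have : (0:ℝ) ≤ m := Nat.cast_nonneg m
      linarith
    have hC := base_lintegral_lt_top (n := n) hs'
    have hIH := ih (s - 1/2) (by push_cast at hs ⊢; linarith) hn
    set C := ∫⁻ u : Fin n → ℝ, ENNReal.ofReal ((1 + u ⬝ᵥ u) ^ (-s)) with hCdef
    set e := MeasurableEquiv.piFinSuccAbove (fun _ : Fin (m+1) => Fin n → ℝ) 0 with hedef
    have hmp := MeasureTheory.volume_preserving_piFinSuccAbove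
      (fun _ : Fin (m+1) => Fin n → ℝ) 0
    rw [← (hmp.symm e).lintegral_comp (sph_meas (n := n) (k := m + 1) s)]
    rw [show (volume : Measure ((Fin n → ℝ) × (Fin m → Fin n → ℝ)))
        = (volume : Measure (Fin n → ℝ)).prod (volume : Measure (Fin m → Fin n → ℝ)) from rfl]
    have hTon : (∫⁻ p : (Fin n → ℝ) × (Fin m → Fin n → ℝ),
          ENNReal.ofReal ((1 + Matrix.of (e.symm p) * (Matrix.of (e.symm p))ᵀ).det ^ (-s))
          ∂((volume : Measure (Fin n → ℝ)).prod (volume : Measure (Fin m → Fin n → ℝ))))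
        = ∫⁻ Y : Fin m → Fin n → ℝ, ∫⁻ v : Fin n → ℝ,
            ENNReal.ofReal
              ((1 + Matrix.of (e.symm (v, Y)) * (Matrix.of (e.symm (v, Y)))ᵀ).det ^ (-s)) :=
      lintegral_prod_symm' _ ((sph_meas (n := n) (k := m + 1) s).comp e.symm.measurable)
    rw [hTon]
    have hesymm : ∀ (v : Fin n → ℝ) (Y : Fin m → Fin n → ℝ),
        e.symm (v, Y) = Fin.insertNth (0 : Fin (m+1)) v Y := fun v Y => rfl
    have hinner : ∀ Y : Fin m → Fin n → ℝ,
        (∫⁻ v : Fin n → ℝ, ENNReal.ofReal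
          ((1 + Matrix.of (e.symm (v, Y)) * (Matrix.of (e.symm (v, Y)))ᵀ).det ^ (-s)))
          = ENNReal.ofReal ((1 + Matrix.of Y * (Matrix.of Y)ᵀ).det ^ (-(s - 1/2))) * C := by
      intro Y
      have hApd := posDef_one_add_transpose_mul (Matrix.of Y)
      have hdY : 0 < (1 + Matrix.of Y * (Matrix.of Y)ᵀ).det := gram_det_pos Y
      have hAdet : (1 + (Matrix.of Y)ᵀ * Matrix.of Y).det
          = (1 + Matrix.of Y * (Matrix.of Y)ᵀ).det := Matrix.det_one_add_mul_comm _ _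
      have hq_nonneg : ∀ v : Fin n → ℝ,
          0 ≤ v ⬝ᵥ ((1 + (Matrix.of Y)ᵀ * Matrix.of Y)⁻¹ *ᵥ v) := by
        intro v
        have := hApd.inv.posSemidef.dotProduct_mulVec_nonneg v
        simpa using this
      have hsplit : ∀ v : Fin n → ℝ, ENNReal.ofReal
            ((1 + Matrix.of (e.symm (v, Y)) * (Matrix.of (e.symm (v, Y)))ᵀ).det ^ (-s))
          = ENNReal.ofReal ((1 + Matrix.of Y * (Matrix.of Y)ᵀ).det ^ (-s)) *
            ENNReal.ofReal
              ((1 + v ⬝ᵥ ((1 + (Matrix.of Y)ᵀ * Matrix.of Y)⁻¹ *ᵥ v)) ^ (-s)) := by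
        intro v
        rw [hesymm, det_gram_cons, Real.mul_rpow hdY.le (by linarith [hq_nonneg v]),
          ENNReal.ofReal_mul (by positivity)]
      rw [lintegral_congr hsplit, lintegral_const_mul' _ _ ENNReal.ofReal_ne_top,
        lintegral_quadratic _ hApd s, ← mul_assoc,
        ← ENNReal.ofReal_mul (by positivity), hAdet]
      congr 2
      rw [← Real.rpow_add hdY]
      congr 1
      ring
    calc (∫⁻ Y : Fin m → Fin n → ℝ, ∫⁻ v : Fin n → ℝ, ENNReal.ofReal
            ((1 + Matrix.of (e.symm (v, Y)) * (Matrix.of (e.symm (v, Y)))ᵀ).det ^ (-s)))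
        = ∫⁻ Y : Fin m → Fin n → ℝ, ENNReal.ofReal
            ((1 + Matrix.of Y * (Matrix.of Y)ᵀ).det ^ (-(s - 1/2))) * C :=
          lintegral_congr hinner
      _ = (∫⁻ Y : Fin m → Fin n → ℝ, ENNReal.ofReal
            ((1 + Matrix.of Y * (Matrix.of Y)ᵀ).det ^ (-(s - 1/2)))) * C :=
          lintegral_mul_const' _ _ hC.ne
      _ < ⊤ := ENNReal.mul_lt_top hIH hC

end

end Stmt6Aux

open Stmt6Aux in
/-- The spherical vector `h_σ(X) = det(I + XᵀX)^(−(σ+n)/2)` of the degenerate principal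
series of `GL(2n,ℝ)` on `Mₙ(ℝ)` is integrable for `σ > n − 1` and square-integrable
for `σ > −1/2`. -/
theorem stmt6 (n : ℕ) (hn : 1 ≤ n) (σ : ℝ) :
    ((n : ℝ) - 1 < σ →
      Integrable
        (fun X : Fin n → Fin n → ℝ =>
          ((1 + (Matrix.of X)ᵀ * Matrix.of X).det) ^ (-(σ + n) / 2)) volume) ∧
    (-(1 / 2 : ℝ) < σ →
      MemLp
        (fun X : Fin n → Fin n → ℝ =>
          ((1 + (Matrix.of X)ᵀ * Matrix.of X).det) ^ (-(σ + n) / 2))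
        2 volume) := by
  have hdpos : ∀ X : Fin n → Fin n → ℝ, 0 < (1 + (Matrix.of X)ᵀ * Matrix.of X).det :=
    fun X => (posDef_one_add_transpose_mul (Matrix.of X)).det_pos
  have hswap : ∀ X : Fin n → Fin n → ℝ,
      (1 + (Matrix.of X)ᵀ * Matrix.of X).det = (1 + Matrix.of X * (Matrix.of X)ᵀ).det :=
    fun X => Matrix.det_one_add_mul_comm _ _
  have hcont : Continuous fun X : Fin n → Fin n → ℝ =>
      ((1 + (Matrix.of X)ᵀ * Matrix.of X).det) ^ (-(σ + n) / 2) := by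
    have h0 : Continuous fun X : Fin n → Fin n → ℝ =>
        (Matrix.of X : Matrix (Fin n) (Fin n) ℝ) := continuous_id
    exact ((continuous_const.add (h0.matrix_transpose.matrix_mul h0)).matrix_det).rpow_const
      fun X => Or.inl (hdpos X).ne'
  constructor
  · intro hσ
    refine ⟨hcont.aestronglyMeasurable, ?_⟩
    rw [hasFiniteIntegral_iff_ofReal (Filter.Eventually.of_forall fun X =>
      Real.rpow_nonneg (hdpos X).le _)]
    have hpt : ∀ X : Fin n → Fin n → ℝ,
        ENNReal.ofReal (((1 + (Matrix.of X)ᵀ * Matrix.of X).det) ^ (-(σ + n) / 2))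
          = ENNReal.ofReal ((1 + Matrix.of X * (Matrix.of X)ᵀ).det ^ (-((σ + n) / 2))) := by
      intro X
      rw [hswap]
      congr 1
      ring_nf
    rw [lintegral_congr hpt]
    exact sphInt_lt_top n n ((σ + n) / 2) (by push_cast; linarith) hn
  · intro hσ
    refine ⟨hcont.aestronglyMeasurable, ?_⟩
    rw [eLpNorm_eq_lintegral_rpow_enorm_toReal (by norm_num) (by norm_num)]
    refine ENNReal.rpow_lt_top_of_nonneg (by positivity) (ne_of_lt ?_)
    have hpt : ∀ X : Fin n → Fin n → ℝ,
        ‖((1 + (Matrix.of X)ᵀ * Matrix.of X).det) ^ (-(σ + n) / 2)‖ₑ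
            ^ (2 : ℝ≥0∞).toReal
          = ENNReal.ofReal ((1 + Matrix.of X * (Matrix.of X)ᵀ).det ^ (-(σ + n))) := by
      intro X
      have hfx : (0:ℝ) ≤ ((1 + (Matrix.of X)ᵀ * Matrix.of X).det) ^ (-(σ + n) / 2) :=
        Real.rpow_nonneg (hdpos X).le _
      rw [Real.enorm_eq_ofReal hfx, ENNReal.toReal_ofNat,
        ENNReal.ofReal_rpow_of_nonneg hfx (by norm_num), hswap,
        ← Real.rpow_mul ((hswap X ▸ hdpos X : (0:ℝ) <
            (1 + Matrix.of X * (Matrix.of X)ᵀ).det)).le]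
      congr 1
      ring
    rw [lintegral_congr hpt]
    exact sphInt_lt_top n n (σ + n) (by push_cast; linarith) hn
end

section
/- Let n ≥ 1 and let σ, τ ∈ ℝ satisfy n < τ < σ + 1. Then the double integral ∫_{M_n(ℝ)} ∫_{M_n(ℝ)} det(I_n + XᵀX)^{−(σ+n)/2} det(I_n + YᵀY)^{−(σ+n)/2} |det(X − Y)|^{τ−n} dX dY converges (is finite), where both integrals are over the space M_n(ℝ) of n×n real matrices with Lebesgue measure. -/
open MeasureTheory Matrix

section AuxStmt10
open scoped MatrixOrder
variable {k : ℕ}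

private lemma psd_det_nonneg {S : Matrix (Fin k) (Fin k) ℝ} (hS : S.PosSemidef) :
    0 ≤ S.det := by
  rw [← CFC.sqrt_mul_sqrt_self S hS.nonneg, det_mul]
  exact mul_self_nonneg _

private lemma psd_posDef {S : Matrix (Fin k) (Fin k) ℝ} (hS : S.PosSemidef)
    (h : S.det ≠ 0) : S.PosDef := by
  exact hS.posDef_iff_det_ne_zero.mpr h

private lemma one_le_det_one_add {K : Matrix (Fin k) (Fin k) ℝ} (hK : K.PosSemidef) :
    1 ≤ (1 + K).det := by
  have hH := hK.isHermitian
  have hspec := hH.spectral_theorem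
  rw [Unitary.conjStarAlgAut_apply] at hspec
  set U : Matrix (Fin k) (Fin k) ℝ := (hH.eigenvectorUnitary : Matrix (Fin k) (Fin k) ℝ) with hUdef
  have hU1 : U * star U = 1 := Matrix.mem_unitaryGroup_iff.mp hH.eigenvectorUnitary.2
  set Dg : Matrix (Fin k) (Fin k) ℝ := diagonal (RCLike.ofReal ∘ hH.eigenvalues) with hDg
  have h1K : 1 + K = U * (1 + Dg) * star U := by
    rw [Matrix.mul_add, Matrix.mul_one, Matrix.add_mul, hU1, ← hspec]
  rw [h1K, det_mul, det_mul]
  have hcomm : U.det * (1 + Dg).det * (star U).det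
      = (1 + Dg).det * (U.det * (star U).det) := by ring
  rw [hcomm, ← det_mul, hU1, det_one, mul_one, hDg]
  rw [show (1 : Matrix (Fin k) (Fin k) ℝ) = diagonal (fun _ => 1) from (Matrix.diagonal_one).symm,
    Matrix.diagonal_add, Matrix.det_diagonal]
  have h1 : (1:ℝ) = ∏ _i : Fin k, (1:ℝ) := by simp
  rw [h1]
  refine Finset.prod_le_prod (fun i _ => zero_le_one) fun i _ => ?_
  have := hK.eigenvalues_nonneg i
  simp only [Pi.add_apply, Function.comp_apply, RCLike.ofReal_real_eq_id, id_eq]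
  linarith


private lemma det_le_det_add {S N : Matrix (Fin k) (Fin k) ℝ} (hS : S.PosSemidef)
    (hN : N.PosSemidef) : S.det ≤ (S + N).det := by
  rcases eq_or_ne S.det 0 with h | h
  · rw [h]; exact psd_det_nonneg (hS.add hN)
  · have hSpd := psd_posDef hS h
    have hu : IsUnit S.det := h.isUnit
    have hfact : S + N = S * (1 + S⁻¹ * N) := by
      rw [Matrix.mul_add, Matrix.mul_one, Matrix.mul_nonsing_inv_cancel_left _ _ hu]
    set R := CFC.sqrt N with hRdef
    have hRR : R * R = N := CFC.sqrt_mul_sqrt_self N hN.nonneg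
    have hherm : Rᴴ = R := (CFC.sqrt_nonneg N).posSemidef.isHermitian
    have h1 : (1 : ℝ) ≤ (1 + S⁻¹ * N).det := by
      have e1 : (1 + S⁻¹ * N).det = (1 + Rᴴ * S⁻¹ * R).det := by
        rw [← hRR, ← Matrix.mul_assoc, Matrix.det_one_add_mul_comm,
          ← Matrix.mul_assoc, hherm]
      rw [e1]
      exact one_le_det_one_add (hSpd.posSemidef.inv.conjTranspose_mul_mul_same R)
    calc S.det = S.det * 1 := (mul_one _).symm
    _ ≤ S.det * (1 + S⁻¹ * N).det :=
        mul_le_mul_of_nonneg_left h1 (psd_det_nonneg hS)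
    _ = (S + N).det := by rw [hfact, det_mul]

private lemma det_sq_le {n : ℕ} (X Y : Matrix (Fin n) (Fin n) ℝ) :
    ((X - Y).det) ^ 2 ≤ (1 + Xᵀ * X).det * (1 + Yᵀ * Y).det := by
  classical
  have hA : (1 + Xᵀ * X).PosDef := by
    have h := Matrix.posSemidef_conjTranspose_mul_self X
    rw [Matrix.conjTranspose_eq_transpose_of_trivial] at h
    exact Matrix.PosDef.one.add_posSemidef h
  have hD : (1 + Yᵀ * Y).PosDef := by
    have h := Matrix.posSemidef_conjTranspose_mul_self Y
    rw [Matrix.conjTranspose_eq_transpose_of_trivial] at h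
    exact Matrix.PosDef.one.add_posSemidef h
  set Z : Matrix (Fin n ⊕ Fin n) (Fin n ⊕ Fin n) ℝ := fromBlocks 1 1 X Y with hZ
  have hZdet : Z.det = (Y - X).det := by
    rw [hZ, Matrix.det_fromBlocks_one₁₁, Matrix.mul_one]
  set A := 1 + Xᵀ * X with hAd
  set D := 1 + Yᵀ * Y with hDd
  set B : Matrix (Fin n) (Fin n) ℝ := 1 + Xᵀ * Y with hBd
  have hBH : Bᴴ = 1 + Yᵀ * X := by
    rw [Matrix.conjTranspose_eq_transpose_of_trivial, hBd, Matrix.transpose_add, Matrix.transpose_one, Matrix.transpose_mul,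
      Matrix.transpose_transpose]
  have hG : Zᵀ * Z = fromBlocks A B Bᴴ D := by
    rw [hZ, hBH, Matrix.fromBlocks_transpose, Matrix.fromBlocks_multiply]
    congr 1 <;> simp [hAd, hDd, hBd, Matrix.transpose_one]
  have hGpsd : (fromBlocks A B Bᴴ D).PosSemidef := by
    rw [← hG]
    have h := Matrix.posSemidef_conjTranspose_mul_self Z
    rwa [Matrix.conjTranspose_eq_transpose_of_trivial] at h
  haveI : Invertible A := A.invertibleOfIsUnitDet hA.det_pos.ne'.isUnit
  have hSchur : (fromBlocks A B Bᴴ D).det = A.det * (D - Bᴴ * A⁻¹ * B).det := by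
    rw [Matrix.det_fromBlocks₁₁, Matrix.invOf_eq_nonsing_inv]
  have hS : (D - Bᴴ * A⁻¹ * B).PosSemidef := (Matrix.PosDef.fromBlocks₁₁ B D hA).mp hGpsd
  have hNpsd : (Bᴴ * A⁻¹ * B).PosSemidef := hA.posSemidef.inv.conjTranspose_mul_mul_same B
  have hmono : (D - Bᴴ * A⁻¹ * B).det ≤ D.det := by
    have h := det_le_det_add hS hNpsd
    rwa [sub_add_cancel] at h
  have hZZ : ((Y - X).det) ^ 2 = A.det * (D - Bᴴ * A⁻¹ * B).det := by
    rw [← hZdet, sq, ← hSchur, ← hG, Matrix.det_mul, Matrix.det_transpose]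
  have hXY : ((X - Y).det) ^ 2 = ((Y - X).det) ^ 2 := by
    rw [show X - Y = -(Y - X) from (neg_sub Y X).symm, Matrix.det_neg, mul_pow]
    have : ((-1 : ℝ) ^ Fintype.card (Fin n)) ^ 2 = 1 := by
      rw [← pow_mul, mul_comm, pow_mul]; simp
    rw [this, one_mul]
  rw [hXY, hZZ]
  exact mul_le_mul_of_nonneg_left hmono hA.det_pos.le


private lemma quad_nonneg {B : Matrix (Fin k) (Fin k) ℝ} (hB : B.PosSemidef) (r : Fin k → ℝ) :
    0 ≤ r ⬝ᵥ (B *ᵥ r) := by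
  simpa using hB.dotProduct_mulVec_nonneg r

private lemma cont_quad (B : Matrix (Fin k) (Fin k) ℝ) :
    Continuous fun r : Fin k → ℝ => r ⬝ᵥ (B *ᵥ r) := by
  simp only [dotProduct, Matrix.mulVec]
  exact continuous_finset_sum _ fun i _ =>
    (continuous_apply i).mul <| continuous_finset_sum _ fun j _ =>
      continuous_const.mul (continuous_apply j)

private lemma det_add_vecMulVec {A : Matrix (Fin k) (Fin k) ℝ} (hA : A.PosDef) (r : Fin k → ℝ) :
    (A + vecMulVec r r).det = A.det * (1 + r ⬝ᵥ (A⁻¹ *ᵥ r)) := by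
  have hu := hA.det_pos.ne'.isUnit
  have hfact : A + vecMulVec r r = A * (1 + A⁻¹ * (replicateCol (Fin 1) r * replicateRow (Fin 1) r)) := by
    rw [Matrix.mul_add, Matrix.mul_one, Matrix.vecMulVec_eq (Fin 1),
      Matrix.mul_nonsing_inv_cancel_left _ _ hu]
    rfl
  rw [hfact, det_mul]
  congr 1
  rw [← Matrix.mul_assoc, Matrix.det_one_add_mul_comm, Matrix.det_fin_one]
  simp only [Matrix.add_apply, Matrix.one_apply_eq, Matrix.mul_apply, Matrix.replicateRow_apply,
    Matrix.replicateCol_apply, dotProduct, Matrix.mulVec, Finset.univ_unique, Finset.sum_singleton]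


private lemma int_base {s : ℝ} (hs : (k : ℝ) < s) :
    Integrable (fun y : Fin k → ℝ => (1 + y ⬝ᵥ y) ^ (-s / 2)) volume := by
  have hfin : (Module.finrank ℝ (Fin k → ℝ) : ℝ) < s := by
    rwa [Module.finrank_fin_fun]
  have i1 : Integrable (fun y : Fin k → ℝ => ((1 : ℝ) + ‖y‖ ^ 2) ^ (-s / 2)) volume :=
    integrable_rpow_neg_one_add_norm_sq hfin
  have hdnn : ∀ y : Fin k → ℝ, 0 ≤ y ⬝ᵥ y := fun y =>
    Finset.sum_nonneg fun i _ => mul_self_nonneg _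
  have hb0 : ∀ y : Fin k → ℝ, (0:ℝ) < 1 + y ⬝ᵥ y := fun y => by
    have := hdnn y; linarith
  have hcont0 : Continuous fun y : Fin k → ℝ => (1 + y ⬝ᵥ y) ^ (-s / 2) := by
    refine Continuous.rpow_const (continuous_const.add ?_) fun y => Or.inl (hb0 y).ne'
    exact continuous_finset_sum _ fun i _ => (continuous_apply i).mul (continuous_apply i)
  refine i1.mono' hcont0.aestronglyMeasurable (Filter.Eventually.of_forall fun y => ?_)
  rw [Real.norm_eq_abs, abs_of_nonneg (Real.rpow_nonneg (hb0 y).le _)]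
  have hnorm : ‖y‖ ^ 2 ≤ y ⬝ᵥ y := by
    have h1 : ‖y‖ ≤ Real.sqrt (y ⬝ᵥ y) := by
      refine (pi_norm_le_iff_of_nonneg (Real.sqrt_nonneg _)).mpr fun i => ?_
      rw [Real.norm_eq_abs]
      refine (Real.le_sqrt (abs_nonneg _) (hdnn y)).mpr ?_
      rw [sq_abs, sq]
      exact Finset.single_le_sum (f := fun j => y j * y j)
        (fun j _ => mul_self_nonneg _) (Finset.mem_univ i)
    calc ‖y‖ ^ 2 ≤ Real.sqrt (y ⬝ᵥ y) ^ 2 := by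
          exact pow_le_pow_left₀ (norm_nonneg _) h1 2
    _ = y ⬝ᵥ y := Real.sq_sqrt (hdnn y)
  refine Real.rpow_le_rpow_of_nonpos (by positivity) (by linarith)
    (by have : (0:ℝ) ≤ k := Nat.cast_nonneg k; linarith)

private lemma intC {s : ℝ} (hs : (k : ℝ) < s) {A : Matrix (Fin k) (Fin k) ℝ} (hA : A.PosDef) :
    Integrable (fun r : Fin k → ℝ => (1 + r ⬝ᵥ (A⁻¹ *ᵥ r)) ^ (-s / 2)) volume ∧
      ∫ r : Fin k → ℝ, (1 + r ⬝ᵥ (A⁻¹ *ᵥ r)) ^ (-s / 2) =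
        Real.sqrt A.det * ∫ y : Fin k → ℝ, (1 + y ⬝ᵥ y) ^ (-s / 2) := by
  set S := CFC.sqrt A with hSdef
  have hSS : S * S = A := CFC.sqrt_mul_sqrt_self A hA.posSemidef.nonneg
  have hdet2 : S.det * S.det = A.det := by rw [← det_mul, hSS]
  have hSnn : 0 ≤ S.det := psd_det_nonneg (CFC.sqrt_nonneg A).posSemidef
  have hSne : S.det ≠ 0 := fun h0 => hA.det_pos.ne' (by rw [← hdet2, h0, mul_zero])
  have hSpos : 0 < S.det := hSnn.lt_of_ne' hSne
  have hSu : IsUnit S.det := hSne.isUnit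
  have hdetS : S.det = Real.sqrt A.det := by rw [← hdet2, Real.sqrt_mul_self hSnn]
  have hSt : Sᵀ = S := by
    have h : Sᴴ = S := (CFC.sqrt_nonneg A).posSemidef.isHermitian
    rwa [Matrix.conjTranspose_eq_transpose_of_trivial] at h
  have hmat : S * (A⁻¹ * S) = 1 := by
    rw [← hSS, Matrix.mul_inv_rev, Matrix.mul_assoc S⁻¹ S⁻¹ S,
      Matrix.nonsing_inv_mul S hSu, Matrix.mul_one, Matrix.mul_nonsing_inv S hSu]
  have hkey : ∀ y : Fin k → ℝ, (S *ᵥ y) ⬝ᵥ (A⁻¹ *ᵥ (S *ᵥ y)) = y ⬝ᵥ y := by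
    intro y
    rw [Matrix.mulVec_mulVec, Matrix.dotProduct_mulVec]
    have h1 : S *ᵥ y = y ᵥ* S := by rw [← hSt, Matrix.mulVec_transpose, hSt]
    rw [h1, Matrix.vecMul_vecMul, hmat, Matrix.vecMul_one]
  have hbpos : ∀ r : Fin k → ℝ, (0:ℝ) < 1 + r ⬝ᵥ (A⁻¹ *ᵥ r) := fun r => by
    have := quad_nonneg hA.posSemidef.inv r; linarith
  have hmap := Real.map_matrix_volume_pi_eq_smul_volume_pi hSne
  have hvol : (volume : Measure (Fin k → ℝ)) =
      ENNReal.ofReal S.det • Measure.map (Matrix.toLin' S) volume := by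
    rw [hmap, smul_smul, abs_inv, abs_of_pos hSpos, ← ENNReal.ofReal_mul hSpos.le,
      mul_inv_cancel₀ hSne, ENNReal.ofReal_one, one_smul]
  have hL : Continuous (Matrix.toLin' S) := LinearMap.continuous_on_pi _
  have hcontf : Continuous (fun r : Fin k → ℝ => (1 + r ⬝ᵥ (A⁻¹ *ᵥ r)) ^ (-s / 2)) :=
    (continuous_const.add (cont_quad A⁻¹)).rpow_const fun r => Or.inl (hbpos r).ne'
  have hcomp : (fun r : Fin k → ℝ => (1 + r ⬝ᵥ (A⁻¹ *ᵥ r)) ^ (-s / 2)) ∘ (Matrix.toLin' S) =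
      fun y : Fin k → ℝ => (1 + y ⬝ᵥ y) ^ (-s / 2) := by
    funext y
    simp only [Function.comp_apply, Matrix.toLin'_apply, hkey]
  have hInt_map : Integrable (fun r : Fin k → ℝ => (1 + r ⬝ᵥ (A⁻¹ *ᵥ r)) ^ (-s / 2))
      (Measure.map (Matrix.toLin' S) volume) := by
    rw [integrable_map_measure hcontf.aestronglyMeasurable hL.measurable.aemeasurable, hcomp]
    exact int_base hs
  constructor
  · rw [hvol]
    exact hInt_map.smul_measure ENNReal.ofReal_ne_top
  · conv_lhs => rw [hvol]
    rw [integral_smul_measure,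
      integral_map hL.measurable.aemeasurable hcontf.aestronglyMeasurable]
    rw [ENNReal.toReal_ofReal hSnn, ← hdetS]
    simp only [Matrix.toLin'_apply, hkey, smul_eq_mul]


private lemma posDef_one_add {m k : ℕ} (X : Fin m → Fin k → ℝ) :
    ((1 : Matrix (Fin k) (Fin k) ℝ) + (Matrix.of X)ᵀ * Matrix.of X).PosDef := by
  have h := Matrix.posSemidef_conjTranspose_mul_self (Matrix.of X)
  rw [Matrix.conjTranspose_eq_transpose_of_trivial] at h
  exact Matrix.PosDef.one.add_posSemidef h

private lemma intD (k : ℕ) (m : ℕ) : ∀ (s : ℝ), (k + m : ℝ) - 1 < s →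
    Integrable (fun X : Fin m → Fin k → ℝ =>
      ((1 + (Matrix.of X)ᵀ * Matrix.of X).det) ^ (-s / 2)) volume := by
  induction m with
  | zero =>
      intro s _
      have hconst : (fun X : Fin 0 → Fin k → ℝ =>
          ((1 + (Matrix.of X)ᵀ * Matrix.of X).det) ^ (-s / 2)) = fun _ => (1 : ℝ) := by
        funext X
        have h0 : (Matrix.of X)ᵀ * Matrix.of X = 0 := by
          ext a b
          simp [Matrix.mul_apply]
        rw [h0, add_zero, det_one, Real.one_rpow]
      rw [hconst]
      haveI : IsProbabilityMeasure (volume : Measure (Fin 0 → Fin k → ℝ)) := by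
        constructor
        rw [MeasureTheory.volume_pi]
        exact Measure.pi_empty_univ (fun _ => (volume : Measure (Fin k → ℝ)))
      exact integrable_const 1
  | succ m IH =>
      intro s hs
      have hks : (k : ℝ) < s := by
        have : (0:ℝ) ≤ m := Nat.cast_nonneg m
        push_cast at hs
        linarith
      have hIH : Integrable (fun X' : Fin m → Fin k → ℝ =>
          ((1 + (Matrix.of X')ᵀ * Matrix.of X').det) ^ (-(s - 1) / 2)) volume := by
        apply IH
        push_cast at hs ⊢
        linarith
      have hmp := MeasureTheory.volume_preserving_piFinSuccAbove
        (fun _ : Fin (m + 1) => (Fin k → ℝ)) 0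
      set e := MeasurableEquiv.piFinSuccAbove (fun _ : Fin (m + 1) => (Fin k → ℝ)) 0 with hedef
      rw [← (MeasurePreserving.symm e hmp).integrable_comp_emb e.symm.measurableEmbedding]
      have hesymm : ∀ p : (Fin k → ℝ) × (Fin m → Fin k → ℝ),
          e.symm p = Fin.insertNth 0 p.1 p.2 := fun p => rfl
      set G := fun p : (Fin k → ℝ) × (Fin m → Fin k → ℝ) =>
        (((1 + (Matrix.of p.2)ᵀ * Matrix.of p.2) + vecMulVec p.1 p.1).det) ^ (-s / 2) with hGdef
      have hcomp : ((fun X : Fin (m + 1) → Fin k → ℝ =>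
          ((1 + (Matrix.of X)ᵀ * Matrix.of X).det) ^ (-s / 2)) ∘ e.symm) = G := by
        funext p
        simp only [Function.comp_apply, hGdef]
        congr 2
        ext a b
        simp only [Matrix.add_apply, Matrix.mul_apply, Matrix.transpose_apply, Matrix.of_apply,
          Matrix.vecMulVec_apply]
        rw [Fin.sum_univ_succAbove (fun i => e.symm p i a * e.symm p i b) 0]
        simp only [hesymm, Fin.insertNth_apply_same, Fin.insertNth_apply_succAbove]
        ring
      rw [hcomp]
      have hApd : ∀ X' : Fin m → Fin k → ℝ,
          ((1 : Matrix (Fin k) (Fin k) ℝ) + (Matrix.of X')ᵀ * Matrix.of X').PosDef := posDef_one_add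
      have hq : ∀ (X' : Fin m → Fin k → ℝ) (r : Fin k → ℝ),
          (0:ℝ) ≤ r ⬝ᵥ (((1 : Matrix (Fin k) (Fin k) ℝ) + (Matrix.of X')ᵀ * Matrix.of X')⁻¹ *ᵥ r) :=
        fun X' r => quad_nonneg (hApd X').posSemidef.inv r
      have hGid : ∀ p, G p = (((1 : Matrix (Fin k) (Fin k) ℝ) + (Matrix.of p.2)ᵀ * Matrix.of p.2).det) ^ (-s / 2) *
          (1 + p.1 ⬝ᵥ (((1 : Matrix (Fin k) (Fin k) ℝ) + (Matrix.of p.2)ᵀ * Matrix.of p.2)⁻¹ *ᵥ p.1)) ^ (-s / 2) := by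
        intro p
        simp only [hGdef]
        rw [det_add_vecMulVec (hApd p.2) p.1,
          Real.mul_rpow (hApd p.2).det_pos.le (by have := hq p.2 p.1; linarith)]
      have hGcont : Continuous G := by
        refine Continuous.rpow_const ?_ fun p => Or.inl ?_
        · apply Continuous.matrix_det
          apply continuous_matrix
          intro a b
          have hent : (fun p : (Fin k → ℝ) × (Fin m → Fin k → ℝ) =>
              (((1 : Matrix (Fin k) (Fin k) ℝ) + (Matrix.of p.2)ᵀ * Matrix.of p.2) + vecMulVec p.1 p.1) a b) =
              fun p => ((1 : Matrix (Fin k) (Fin k) ℝ) a b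
                + ∑ i : Fin m, p.2 i a * p.2 i b) + p.1 a * p.1 b := by
            funext p
            simp [Matrix.add_apply, Matrix.mul_apply, Matrix.vecMulVec_apply]
          rw [hent]
          have hc2 : ∀ (i : Fin m) (c : Fin k),
              Continuous fun p : (Fin k → ℝ) × (Fin m → Fin k → ℝ) => p.2 i c :=
            fun i c => (continuous_apply c).comp ((continuous_apply i).comp continuous_snd)
          have hc1 : ∀ c : Fin k,
              Continuous fun p : (Fin k → ℝ) × (Fin m → Fin k → ℝ) => p.1 c :=
            fun c => (continuous_apply c).comp continuous_fst
          exact (continuous_const.add (continuous_finset_sum _ fun i _ =>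
            (hc2 i a).mul (hc2 i b))).add ((hc1 a).mul (hc1 b))
        · rw [det_add_vecMulVec (hApd p.2) p.1]
          have h1 := (hApd p.2).det_pos
          have h2 := hq p.2 p.1
          positivity
      rw [MeasureTheory.Measure.volume_eq_prod, integrable_prod_iff' hGcont.aestronglyMeasurable]
      constructor
      · refine Filter.Eventually.of_forall fun X' => ?_
        simp only [hGid]
        exact (intC hks (hApd X')).1.const_mul _
      · have hGnn : ∀ p, 0 ≤ G p := fun p => by
          rw [hGid]
          exact mul_nonneg (Real.rpow_nonneg (hApd p.2).det_pos.le _)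
            (Real.rpow_nonneg (by have := hq p.2 p.1; linarith) _)
        have hval : (fun X' : Fin m → Fin k → ℝ => ∫ r : Fin k → ℝ, ‖G (r, X')‖) =
            fun X' => (∫ y : Fin k → ℝ, (1 + y ⬝ᵥ y) ^ (-s / 2)) *
              (((1 : Matrix (Fin k) (Fin k) ℝ) + (Matrix.of X')ᵀ * Matrix.of X').det) ^ (-(s - 1) / 2) := by
          funext X'
          have h1 : ∀ r : Fin k → ℝ, ‖G (r, X')‖ =
              (((1 : Matrix (Fin k) (Fin k) ℝ) + (Matrix.of X')ᵀ * Matrix.of X').det) ^ (-s / 2) *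
              (1 + r ⬝ᵥ (((1 : Matrix (Fin k) (Fin k) ℝ) + (Matrix.of X')ᵀ * Matrix.of X')⁻¹ *ᵥ r)) ^ (-s / 2) := by
            intro r
            rw [Real.norm_eq_abs, abs_of_nonneg (hGnn (r, X')), hGid]
          simp only [h1]
          rw [MeasureTheory.integral_const_mul, (intC hks (hApd X')).2]
          set d := ((1 : Matrix (Fin k) (Fin k) ℝ) + (Matrix.of X')ᵀ * Matrix.of X').det with hd
          have hdpos : 0 < d := (hApd X').det_pos
          set C := ∫ y : Fin k → ℝ, (1 + y ⬝ᵥ y) ^ (-s / 2) with hC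
          rw [Real.sqrt_eq_rpow]
          calc d ^ (-s / 2) * (d ^ ((1:ℝ) / 2) * C)
              = C * (d ^ (-s / 2) * d ^ ((1:ℝ) / 2)) := by ring
          _ = C * d ^ (-s / 2 + 1 / 2) := by rw [Real.rpow_add hdpos]
          _ = C * d ^ (-(s - 1) / 2) := by
              congr 1
              ring_nf
        rw [hval]
        exact hIH.const_mul _


private lemma cont_detX {m k : ℕ} : Continuous fun X : Fin m → Fin k → ℝ =>
    ((1 : Matrix (Fin k) (Fin k) ℝ) + (Matrix.of X)ᵀ * Matrix.of X).det := by
  apply Continuous.matrix_det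
  apply continuous_matrix
  intro a b
  have hent : (fun X : Fin m → Fin k → ℝ =>
      ((1 : Matrix (Fin k) (Fin k) ℝ) + (Matrix.of X)ᵀ * Matrix.of X) a b) =
      fun X => (1 : Matrix (Fin k) (Fin k) ℝ) a b + ∑ i : Fin m, X i a * X i b := by
    funext X
    simp [Matrix.add_apply, Matrix.mul_apply]
  rw [hent]
  exact continuous_const.add <| continuous_finset_sum _ fun i _ =>
    (continuous_apply_apply i a).mul
      (continuous_apply_apply i b)

end AuxStmt10

/-- Convergence of the hermitian pairing of spherical vectors: for `n < τ < σ + 1`, the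
double integral `∫∫ det(I+XᵀX)^(−(σ+n)/2) det(I+YᵀY)^(−(σ+n)/2) |det(X−Y)|^(τ−n) dX dY`
over `Mₙ(ℝ) × Mₙ(ℝ)` is finite. -/
theorem stmt10 (n : ℕ) (hn : 1 ≤ n) (σ τ : ℝ) (h₁ : (n : ℝ) < τ) (h₂ : τ < σ + 1) :
    Integrable
      (fun P : (Fin n → Fin n → ℝ) × (Fin n → Fin n → ℝ) =>
        ((1 + (Matrix.of P.1)ᵀ * Matrix.of P.1).det) ^ (-(σ + n) / 2) *
          ((1 + (Matrix.of P.2)ᵀ * Matrix.of P.2).det) ^ (-(σ + n) / 2) *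
          |(Matrix.of P.1 - Matrix.of P.2).det| ^ (τ - n))
      volume := by
  have hτn : (0:ℝ) ≤ τ - n := by linarith
  set u : ℝ := σ + 2 * n - τ with hu
  have hg : Integrable (fun X : Fin n → Fin n → ℝ =>
      ((1 + (Matrix.of X)ᵀ * Matrix.of X).det) ^ (-u / 2)) volume := by
    refine intD n n u ?_
    push_cast
    linarith
  have hgg : Integrable (fun P : (Fin n → Fin n → ℝ) × (Fin n → Fin n → ℝ) =>
      ((1 + (Matrix.of P.1)ᵀ * Matrix.of P.1).det) ^ (-u / 2) *
      ((1 + (Matrix.of P.2)ᵀ * Matrix.of P.2).det) ^ (-u / 2)) volume := by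
    rw [MeasureTheory.Measure.volume_eq_prod]
    exact hg.mul_prod hg
  have hdpos : ∀ (X : Fin n → Fin n → ℝ),
      0 < ((1 : Matrix (Fin n) (Fin n) ℝ) + (Matrix.of X)ᵀ * Matrix.of X).det :=
    fun X => (posDef_one_add X).det_pos
  refine hgg.mono' ?_ (Filter.Eventually.of_forall fun P => ?_)
  · have c1 : Continuous fun P : (Fin n → Fin n → ℝ) × (Fin n → Fin n → ℝ) =>
        ((1 + (Matrix.of P.1)ᵀ * Matrix.of P.1).det) ^ (-(σ + (n:ℝ)) / 2) :=
      (cont_detX.comp continuous_fst).rpow_const fun P => Or.inl (hdpos P.1).ne'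
    have c2 : Continuous fun P : (Fin n → Fin n → ℝ) × (Fin n → Fin n → ℝ) =>
        ((1 + (Matrix.of P.2)ᵀ * Matrix.of P.2).det) ^ (-(σ + (n:ℝ)) / 2) :=
      (cont_detX.comp continuous_snd).rpow_const fun P => Or.inl (hdpos P.2).ne'
    have c3 : Continuous fun P : (Fin n → Fin n → ℝ) × (Fin n → Fin n → ℝ) =>
        |(Matrix.of P.1 - Matrix.of P.2).det| ^ (τ - (n:ℝ)) := by
      have cdet : Continuous fun P : (Fin n → Fin n → ℝ) × (Fin n → Fin n → ℝ) =>
          (Matrix.of P.1 - Matrix.of P.2).det := by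
        apply Continuous.matrix_det
        apply continuous_matrix
        intro a b
        show Continuous fun P : (Fin n → Fin n → ℝ) × (Fin n → Fin n → ℝ) => P.1 a b - P.2 a b
        exact (((continuous_apply_apply a b).comp continuous_fst)).sub
          (((continuous_apply_apply a b).comp continuous_snd))
      exact (continuous_abs.comp cdet).rpow_const fun P => Or.inr hτn
    exact ((c1.mul c2).mul c3).aestronglyMeasurable
  · set a := ((1 : Matrix (Fin n) (Fin n) ℝ) + (Matrix.of P.1)ᵀ * Matrix.of P.1).det with hadef
    set b := ((1 : Matrix (Fin n) (Fin n) ℝ) + (Matrix.of P.2)ᵀ * Matrix.of P.2).det with hbdef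
    set d := (Matrix.of P.1 - Matrix.of P.2).det with hddef
    have ha : 0 < a := hdpos P.1
    have hb : 0 < b := hdpos P.2
    have habs : |d| ^ (τ - (n:ℝ)) ≤ (a * b) ^ ((τ - n) / 2) := by
      have h2 : |d| ≤ Real.sqrt (a * b) := by
        refine (Real.le_sqrt (abs_nonneg _) (mul_nonneg ha.le hb.le)).mpr ?_
        rw [sq_abs]
        exact det_sq_le (Matrix.of P.1) (Matrix.of P.2)
      calc |d| ^ (τ - (n:ℝ)) ≤ (Real.sqrt (a * b)) ^ (τ - (n:ℝ)) :=
            Real.rpow_le_rpow (abs_nonneg _) h2 hτn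
      _ = (a * b) ^ ((τ - n) / 2) := by
          rw [Real.sqrt_eq_rpow, ← Real.rpow_mul (mul_nonneg ha.le hb.le)]
          congr 1
          ring
    have hF0 : 0 ≤ a ^ (-(σ + (n:ℝ)) / 2) * b ^ (-(σ + (n:ℝ)) / 2) :=
      mul_nonneg (Real.rpow_nonneg ha.le _) (Real.rpow_nonneg hb.le _)
    rw [Real.norm_eq_abs, abs_of_nonneg (mul_nonneg hF0 (Real.rpow_nonneg (abs_nonneg d) _))]
    calc a ^ (-(σ + (n:ℝ)) / 2) * b ^ (-(σ + (n:ℝ)) / 2) * |d| ^ (τ - (n:ℝ))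
        ≤ a ^ (-(σ + (n:ℝ)) / 2) * b ^ (-(σ + (n:ℝ)) / 2) * (a * b) ^ ((τ - n) / 2) :=
          mul_le_mul_of_nonneg_left habs hF0
    _ = (a ^ (-(σ + (n:ℝ)) / 2) * a ^ ((τ - (n:ℝ)) / 2)) *
        (b ^ (-(σ + (n:ℝ)) / 2) * b ^ ((τ - (n:ℝ)) / 2)) := by
          rw [Real.mul_rpow ha.le hb.le]
          ring
    _ = a ^ (-u / 2) * b ^ (-u / 2) := by
          rw [← Real.rpow_add ha, ← Real.rpow_add hb]
          congr 1 <;> · congr 1; rw [hu]; push_cast; ring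
end
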